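/- Let A be a Heffter array H(m,n;s,t). Suppose ω_r is a permutation of the set of entries of A that is the composition of m disjoint cycles, one for each row, each cyclically permuting the s entries of that row, and ω_c is a permutation that is the composition of n disjoint cycles, one for each column, each cyclically permuting the t entries of that column. If ω_r and ω_c are compatible (i.e., ω_r ∘ ω_c is a single cycle of length ms on the set of entries), then either: (i) m, n, s and t are all odd; or (ii) m is odd, n is even and s is even; or (iii) m is even, n is odd and t is even. -/

import Mathlib

section Aux
variable {α β : Type*} [DecidableEq α] [Fintype α] [DecidableEq β] [Fintype β]
variable {σ : Equiv.Perm α} {p : α → Prop} [DecidablePred p] {k : α → β}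

set_option linter.unusedSectionVars false

lemma aux_p_apply (hfix : ∀ a, ¬ p a → σ a = a) {a : α} (ha : p a) : p (σ a) := by
  by_contra h
  have h2 : σ (σ a) = σ a := hfix _ h
  have h3 : σ a = a := σ.injective h2
  rw [h3] at h; exact h ha

lemma aux_k_pow (hk : ∀ a, k (σ a) = k a) (e : ℕ) (a : α) : k ((σ ^ e) a) = k a := by
  induction e with
  | zero => simp
  | succ e ih => rw [pow_succ', Equiv.Perm.mul_apply, hk, ih]

lemma aux_k_zpow (hk : ∀ a, k (σ a) = k a) (z : ℤ) (a : α) : k ((σ ^ z) a) = k a := by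
  have hinv : ∀ a, k (σ⁻¹ a) = k a := by
    intro a; conv_rhs => rw [← (show σ (σ⁻¹ a) = a from Equiv.apply_symm_apply σ a)]
    rw [hk]
  obtain ⟨e, rfl | rfl⟩ := Int.eq_nat_or_neg z
  · rw [zpow_natCast]; exact aux_k_pow hk e a
  · rw [zpow_neg, zpow_natCast, ← inv_pow]
    induction e with
    | zero => simp
    | succ e ih => rw [pow_succ', Equiv.Perm.mul_apply, hinv]; exact ih

lemma aux_support (hfix : ∀ a, ¬ p a → σ a = a)
    (htrans : ∀ a b, k a = k b → p a → p b → ∃ e : ℕ, (σ ^ e) a = b)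
    (htwo : ∀ a, p a → ∃ b, p b ∧ k b = k a ∧ b ≠ a) :
    σ.support = Finset.univ.filter p := by
  ext a
  simp only [Equiv.Perm.mem_support, Finset.mem_filter, Finset.mem_univ, true_and]
  constructor
  · intro h; by_contra hp; exact h (hfix a hp)
  · intro hp hfix'
    obtain ⟨b, hpb, hkb, hne⟩ := htwo a hp
    obtain ⟨e, he⟩ := htrans a b hkb.symm hp hpb
    have hall : ∀ f : ℕ, (σ ^ f) a = a := by
      intro f
      induction f with
      | zero => rfl
      | succ f ih => rw [pow_succ', Equiv.Perm.mul_apply, ih, hfix']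
    exact hne (he.symm.trans (hall e))

lemma aux_card (hk : ∀ a, k (σ a) = k a) (hfix : ∀ a, ¬ p a → σ a = a)
    (htrans : ∀ a b, k a = k b → p a → p b → ∃ e : ℕ, (σ ^ e) a = b)
    (htwo : ∀ a, p a → ∃ b, p b ∧ k b = k a ∧ b ≠ a)
    (hsurj : ∀ b : β, ∃ a, p a ∧ k a = b) :
    σ.cycleFactorsFinset.card = Fintype.card β := by
  classical
  have hsupp := aux_support hfix htrans htwo
  have hmem : ∀ a, p a → a ∈ σ.support := by
    intro a ha; rw [hsupp]; simp [ha]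
  choose w hw1 hw2 using hsurj
  rw [← Finset.card_univ]
  symm
  refine Finset.card_bij (fun b _ => σ.cycleOf (w b)) ?_ ?_ ?_
  · intro b _
    exact Equiv.Perm.cycleOf_mem_cycleFactorsFinset_iff.mpr (hmem _ (hw1 b))
  · intro b _ b' _ h
    have h2 : w b' ∈ (σ.cycleOf (w b)).support := by
      rw [h]
      exact Equiv.Perm.mem_support_cycleOf_iff.mpr ⟨Equiv.Perm.SameCycle.refl _ _, hmem _ (hw1 b')⟩
    rw [Equiv.Perm.mem_support_cycleOf_iff] at h2
    obtain ⟨z, hz⟩ := h2.1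
    have hkz := aux_k_zpow hk z (w b)
    rw [hz, hw2, hw2] at hkz
    exact hkz.symm
  · intro c hc
    have hcyc : c.IsCycle := (Equiv.Perm.mem_cycleFactorsFinset_iff.mp hc).1
    obtain ⟨a, ha⟩ := hcyc.nonempty_support
    have hceq : c = σ.cycleOf a := Equiv.Perm.cycle_is_cycleOf ha hc
    have hasupp : a ∈ σ.support := Equiv.Perm.support_cycleOf_le σ a (hceq ▸ ha)
    have hpa : p a := by
      rw [hsupp] at hasupp; exact (Finset.mem_filter.mp hasupp).2
    refine ⟨k a, Finset.mem_univ _, ?_⟩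
    obtain ⟨e, he⟩ := htrans (w (k a)) a (by rw [hw2]) (hw1 _) hpa
    have h5 : σ.cycleOf ((σ ^ e) (w (k a))) = σ.cycleOf (w (k a)) :=
      Equiv.Perm.cycleOf_self_apply_pow σ e (w (k a))
    rw [he] at h5
    rw [hceq]
    exact h5.symm

lemma aux_sign (hk : ∀ a, k (σ a) = k a) (hfix : ∀ a, ¬ p a → σ a = a)
    (htrans : ∀ a b, k a = k b → p a → p b → ∃ e : ℕ, (σ ^ e) a = b)
    (htwo : ∀ a, p a → ∃ b, p b ∧ k b = k a ∧ b ≠ a)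
    (hsurj : ∀ b : β, ∃ a, p a ∧ k a = b) :
    Equiv.Perm.sign σ =
      (-1 : ℤˣ) ^ ((Finset.univ.filter p).card + Fintype.card β) := by
  rw [Equiv.Perm.sign_of_cycleType, Equiv.Perm.sum_cycleType,
    aux_support hfix htrans htwo (σ := σ), Equiv.Perm.cycleType_def, Multiset.card_map,
    show Multiset.card σ.cycleFactorsFinset.val = σ.cycleFactorsFinset.card from rfl,
    aux_card hk hfix htrans htwo hsurj]

lemma aux_eq_one (hk : ∀ a, k (σ a) = k a) (hfix : ∀ a, ¬ p a → σ a = a)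
    (hone : ∀ a b, p a → p b → k a = k b → a = b) : σ = 1 := by
  ext a
  simp only [Equiv.Perm.one_apply]
  by_cases hp : p a
  · exact hone _ _ (aux_p_apply hfix hp) hp (hk a)
  · exact hfix a hp

end Aux

lemma parity_key {m n s t N : ℕ} (hN1 : N = m * s) (hN2 : N = n * t)
    (h1 : Even (N + n + (N + m) + (N + 1))) :
    (Odd m ∧ Odd n ∧ Odd s ∧ Odd t) ∨ (Odd m ∧ Even n ∧ Even s) ∨
      (Even m ∧ Odd n ∧ Even t) := by
  have a1 : N % 2 = (m % 2) * (s % 2) % 2 := by rw [hN1, Nat.mul_mod]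
  have a2 : N % 2 = (n % 2) * (t % 2) % 2 := by rw [hN2, Nat.mul_mod]
  have a3 : (N + n + (N + m) + (N + 1)) % 2 = 0 := Nat.even_iff.mp h1
  simp only [Nat.even_iff, Nat.odd_iff]
  rcases Nat.even_or_odd m with hm | hm <;> rcases Nat.even_or_odd s with hs | hs <;>
    rcases Nat.even_or_odd n with hn | hn <;> rcases Nat.even_or_odd t with ht | ht <;>
    simp only [Nat.even_iff, Nat.odd_iff] at hm hs hn ht <;>
    rw [hm, hs] at a1 <;> rw [hn, ht] at a2 <;> norm_num at a1 a2 <;> omega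

/-- A Heffter array `H(m,n;s,t)`: an `m × n` partially filled array of integers
(empty cells are represented by `0`) such that each row has exactly `s` filled cells,
each column has exactly `t` filled cells, every row and column sums to `0` modulo
`2ms+1`, and for each `1 ≤ x ≤ ms` exactly one of `x, -x` appears, in exactly one cell. -/
def IsHeffter (m n s t : ℕ) (A : Fin m → Fin n → ℤ) : Prop :=
  (∀ i, (Finset.univ.filter (fun j => A i j ≠ 0)).card = s) ∧
  (∀ j, (Finset.univ.filter (fun i => A i j ≠ 0)).card = t) ∧
  (∀ i, (∑ j, A i j) ≡ 0 [ZMOD (2 * m * s + 1)]) ∧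
  (∀ j, (∑ i, A i j) ≡ 0 [ZMOD (2 * m * s + 1)]) ∧
  (∀ i j, A i j ≠ 0 → (A i j).natAbs ∈ Finset.Icc 1 (m * s)) ∧
  (∀ v ∈ Finset.Icc 1 (m * s), ∃! c : Fin m × Fin n, (A c.1 c.2).natAbs = v)

/-- `σ` is a composition of disjoint cycles, one for each row: it preserves rows,
fixes empty cells, and acts transitively (hence as a single cycle) on the filled
cells of each row. -/
def IsRowOrdering (m n : ℕ) (A : Fin m → Fin n → ℤ)
    (σ : Equiv.Perm (Fin m × Fin n)) : Prop :=
  (∀ c, (σ c).1 = c.1) ∧ (∀ c, A c.1 c.2 = 0 → σ c = c) ∧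
  (∀ c c' : Fin m × Fin n, c.1 = c'.1 → A c.1 c.2 ≠ 0 → A c'.1 c'.2 ≠ 0 →
    ∃ e : ℕ, (σ ^ e) c = c')

/-- `σ` is a composition of disjoint cycles, one for each column. -/
def IsColOrdering (m n : ℕ) (A : Fin m → Fin n → ℤ)
    (σ : Equiv.Perm (Fin m × Fin n)) : Prop :=
  (∀ c, (σ c).2 = c.2) ∧ (∀ c, A c.1 c.2 = 0 → σ c = c) ∧
  (∀ c c' : Fin m × Fin n, c.2 = c'.2 → A c.1 c.2 ≠ 0 → A c'.1 c'.2 ≠ 0 →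
    ∃ e : ℕ, (σ ^ e) c = c')

/-- `ωr` and `ωc` are compatible: `ω_r ∘ ω_c` (first apply `ω_r`, then `ω_c`,
following the paper's convention) is a single cycle on the `ms` filled cells. -/
def Compatible (m n : ℕ) (A : Fin m → Fin n → ℤ)
    (ωr ωc : Equiv.Perm (Fin m × Fin n)) : Prop :=
  ∀ c c' : Fin m × Fin n, A c.1 c.2 ≠ 0 → A c'.1 c'.2 ≠ 0 →
    ∃ e : ℕ, ((ωr.trans ωc) ^ e) c = c'

theorem statement0 (m n s t : ℕ) (hm : 0 < m) (hn : 0 < n) (hs : 0 < s) (ht : 0 < t)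
    (A : Fin m → Fin n → ℤ) (hA : IsHeffter m n s t A)
    (ωr ωc : Equiv.Perm (Fin m × Fin n))
    (hr : IsRowOrdering m n A ωr) (hc : IsColOrdering m n A ωc)
    (hcompat : Compatible m n A ωr ωc) :
    (Odd m ∧ Odd n ∧ Odd s ∧ Odd t) ∨ (Odd m ∧ Even n ∧ Even s) ∨
      (Even m ∧ Odd n ∧ Even t) := by
  classical
  set p : Fin m × Fin n → Prop := fun c => A c.1 c.2 ≠ 0 with hp
  set F : Finset (Fin m × Fin n) := Finset.univ.filter p with hF
  -- fiber cardinalities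
  have hrow : ∀ i : Fin m,
      (Finset.univ.filter fun c : Fin m × Fin n => p c ∧ c.1 = i).card = s := by
    intro i
    rw [← hA.1 i]
    refine Finset.card_bij' (fun c _ => c.2) (fun j _ => (i, j)) ?_ ?_ ?_ ?_
    · intro c hcc
      simp only [Finset.mem_filter, Finset.mem_univ, true_and, hp] at hcc ⊢
      rw [← hcc.2]; exact hcc.1
    · intro j hj
      simp only [Finset.mem_filter, Finset.mem_univ, true_and, hp] at hj ⊢
      exact ⟨hj, trivial⟩
    · intro c hcc
      simp only [Finset.mem_filter, Finset.mem_univ, true_and] at hcc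
      exact Prod.ext hcc.2.symm rfl
    · intro j _; rfl
  have hcol : ∀ j : Fin n,
      (Finset.univ.filter fun c : Fin m × Fin n => p c ∧ c.2 = j).card = t := by
    intro j
    rw [← hA.2.1 j]
    refine Finset.card_bij' (fun c _ => c.1) (fun i _ => (i, j)) ?_ ?_ ?_ ?_
    · intro c hcc
      simp only [Finset.mem_filter, Finset.mem_univ, true_and, hp] at hcc ⊢
      rw [← hcc.2]; exact hcc.1
    · intro i hi
      simp only [Finset.mem_filter, Finset.mem_univ, true_and, hp] at hi ⊢
      exact ⟨hi, trivial⟩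
    · intro c hcc
      simp only [Finset.mem_filter, Finset.mem_univ, true_and] at hcc
      exact Prod.ext rfl hcc.2.symm
    · intro i _; rfl
  have hNr : F.card = m * s := by
    rw [hF, Finset.card_eq_sum_card_fiberwise
      (f := Prod.fst) (t := Finset.univ) (fun _ _ => Finset.mem_univ _)]
    have hfib : ∀ i : Fin m,
        ((Finset.univ.filter p).filter fun c => c.1 = i).card = s := by
      intro i; rw [Finset.filter_filter]; exact hrow i
    simp [hfib, Finset.sum_const, Finset.card_univ, mul_comm]
  have hNc : F.card = n * t := by
    rw [hF, Finset.card_eq_sum_card_fiberwise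
      (f := Prod.snd) (t := Finset.univ) (fun _ _ => Finset.mem_univ _)]
    have hfib : ∀ j : Fin n,
        ((Finset.univ.filter p).filter fun c => c.2 = j).card = t := by
      intro j; rw [Finset.filter_filter]; exact hcol j
    simp [hfib, Finset.sum_const, Finset.card_univ, mul_comm]
  have hmsnt : m * s = n * t := hNr.symm.trans hNc
  -- orderings as aux hypotheses
  have hkr : ∀ c, ((ωr c).1 : Fin m) = c.1 := hr.1
  have hkc : ∀ c, ((ωc c).2 : Fin n) = c.2 := hc.1
  have hfixr : ∀ c, ¬ p c → ωr c = c := fun c h => hr.2.1 c (not_not.mp h)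
  have hfixc : ∀ c, ¬ p c → ωc c = c := fun c h => hc.2.1 c (not_not.mp h)
  have htransr : ∀ a b : Fin m × Fin n, a.1 = b.1 → p a → p b → ∃ e : ℕ, (ωr ^ e) a = b :=
    fun a b hab ha hb => hr.2.2 a b hab ha hb
  have htransc : ∀ a b : Fin m × Fin n, a.2 = b.2 → p a → p b → ∃ e : ℕ, (ωc ^ e) a = b :=
    fun a b hab ha hb => hc.2.2 a b hab ha hb
  -- sign of ωr
  have hsignr : Equiv.Perm.sign ωr = (-1 : ℤˣ) ^ (F.card + m) := by
    rcases Nat.lt_or_ge s 2 with h2 | h2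
    · have hs1 : s = 1 := by omega
      have hone : ωr = 1 := by
        refine aux_eq_one (k := Prod.fst) hkr hfixr ?_
        intro a b ha hb hab
        obtain ⟨x, hx⟩ := Finset.card_eq_one.mp (hs1 ▸ hA.1 a.1)
        have hax : a.2 ∈ Finset.univ.filter (fun j => A a.1 j ≠ 0) := by
          simp only [Finset.mem_filter, Finset.mem_univ, true_and]; exact ha
        have hbx : b.2 ∈ Finset.univ.filter (fun j => A a.1 j ≠ 0) := by
          simp only [Finset.mem_filter, Finset.mem_univ, true_and]
          rw [hab]; exact hb
        rw [hx, Finset.mem_singleton] at hax hbx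
        exact Prod.ext hab (hax.trans hbx.symm)
      have heven : Even (F.card + m) := by
        rw [hNr, hs1, mul_one]; exact ⟨m, rfl⟩
      rw [hone, map_one, heven.neg_one_pow]
    · have htwor : ∀ a : Fin m × Fin n, p a → ∃ b, p b ∧ b.1 = a.1 ∧ b ≠ a := by
        intro a ha
        have hlt : 1 < (Finset.univ.filter fun c : Fin m × Fin n => p c ∧ c.1 = a.1).card := by
          rw [hrow]; omega
        obtain ⟨x, hx, y, hy, hxy⟩ := Finset.one_lt_card.mp hlt
        simp only [Finset.mem_filter, Finset.mem_univ, true_and] at hx hy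
        by_cases hxa : x = a
        · subst hxa; exact ⟨y, hy.1, hy.2, hxy.symm⟩
        · exact ⟨x, hx.1, hx.2, hxa⟩
      have hsurjr : ∀ i : Fin m, ∃ c : Fin m × Fin n, p c ∧ c.1 = i := by
        intro i
        have hpos : 0 < (Finset.univ.filter fun c : Fin m × Fin n => p c ∧ c.1 = i).card := by
          rw [hrow]; omega
        obtain ⟨c, hcc⟩ := Finset.card_pos.mp hpos
        simp only [Finset.mem_filter, Finset.mem_univ, true_and] at hcc
        exact ⟨c, hcc⟩
      have := aux_sign (k := Prod.fst) hkr hfixr htransr htwor hsurjr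
      rwa [Fintype.card_fin] at this
  -- sign of ωc
  have hsignc : Equiv.Perm.sign ωc = (-1 : ℤˣ) ^ (F.card + n) := by
    rcases Nat.lt_or_ge t 2 with h2 | h2
    · have ht1 : t = 1 := by omega
      have hone : ωc = 1 := by
        refine aux_eq_one (k := Prod.snd) hkc hfixc ?_
        intro a b ha hb hab
        obtain ⟨x, hx⟩ := Finset.card_eq_one.mp (ht1 ▸ hA.2.1 a.2)
        have hax : a.1 ∈ Finset.univ.filter (fun i => A i a.2 ≠ 0) := by
          simp only [Finset.mem_filter, Finset.mem_univ, true_and]; exact ha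
        have hbx : b.1 ∈ Finset.univ.filter (fun i => A i a.2 ≠ 0) := by
          simp only [Finset.mem_filter, Finset.mem_univ, true_and]
          rw [hab]; exact hb
        rw [hx, Finset.mem_singleton] at hax hbx
        exact Prod.ext (hax.trans hbx.symm) hab
      have heven : Even (F.card + n) := by
        rw [hNc, ht1, mul_one]; exact ⟨n, rfl⟩
      rw [hone, map_one, heven.neg_one_pow]
    · have htwoc : ∀ a : Fin m × Fin n, p a → ∃ b, p b ∧ b.2 = a.2 ∧ b ≠ a := by
        intro a ha
        have hlt : 1 < (Finset.univ.filter fun c : Fin m × Fin n => p c ∧ c.2 = a.2).card := by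
          rw [hcol]; omega
        obtain ⟨x, hx, y, hy, hxy⟩ := Finset.one_lt_card.mp hlt
        simp only [Finset.mem_filter, Finset.mem_univ, true_and] at hx hy
        by_cases hxa : x = a
        · subst hxa; exact ⟨y, hy.1, hy.2, hxy.symm⟩
        · exact ⟨x, hx.1, hx.2, hxa⟩
      have hsurjc : ∀ j : Fin n, ∃ c : Fin m × Fin n, p c ∧ c.2 = j := by
        intro j
        have hpos : 0 < (Finset.univ.filter fun c : Fin m × Fin n => p c ∧ c.2 = j).card := by
          rw [hcol]; omega
        obtain ⟨c, hcc⟩ := Finset.card_pos.mp hpos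
        simp only [Finset.mem_filter, Finset.mem_univ, true_and] at hcc
        exact ⟨c, hcc⟩
      have := aux_sign (k := Prod.snd) hkc hfixc htransc htwoc hsurjc
      rwa [Fintype.card_fin] at this
  -- handle trivial case F.card = 1
  rcases Nat.lt_or_ge F.card 2 with hN2 | hN2
  · have hN1 : F.card = 1 := by
      have : 0 < F.card := by rw [hNr]; positivity
      omega
    have hms1 : m * s = 1 := hNr ▸ hN1
    have hnt1 : n * t = 1 := hNc ▸ hN1
    have hm1 : m = 1 := Nat.eq_one_of_mul_eq_one_right hms1
    have hs1 : s = 1 := Nat.eq_one_of_mul_eq_one_left hms1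
    have hn1 : n = 1 := Nat.eq_one_of_mul_eq_one_right hnt1
    have ht1 : t = 1 := Nat.eq_one_of_mul_eq_one_left hnt1
    subst hm1; subst hs1; subst hn1; subst ht1
    exact Or.inl ⟨odd_one, odd_one, odd_one, odd_one⟩
  -- τ = ωr.trans ωc is a cycle on F
  · set τ : Equiv.Perm (Fin m × Fin n) := ωr.trans ωc with hτ
    have hfixτ : ∀ c, ¬ p c → τ c = c := by
      intro c h
      show ωc (ωr c) = c
      rw [hfixr c h, hfixc c h]
    have htwoτ : ∀ a : Fin m × Fin n, p a →
        ∃ b, p b ∧ (fun _ : Fin m × Fin n => ()) b = (fun _ : Fin m × Fin n => ()) a ∧ b ≠ a := by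
      intro a ha
      obtain ⟨x, hx, y, hy, hxy⟩ := Finset.one_lt_card.mp (hF ▸ hN2)
      simp only [hF, Finset.mem_filter, Finset.mem_univ, true_and] at hx hy
      by_cases hxa : x = a
      · subst hxa; exact ⟨y, hy, rfl, hxy.symm⟩
      · exact ⟨x, hx, rfl, hxa⟩
    have hsuppτ : τ.support = F := by
      rw [hF]
      exact aux_support (k := fun _ : Fin m × Fin n => ()) hfixτ
        (fun a b _ ha hb => hcompat a b ha hb) htwoτ
    have hcycτ : τ.IsCycle := by
      have hpos : 0 < F.card := by omega
      obtain ⟨a0, ha0⟩ := Finset.card_pos.mp hpos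
      have ha0' : a0 ∈ τ.support := hsuppτ ▸ ha0
      have hpa0 : p a0 := by
        rw [hF] at ha0
        exact (Finset.mem_filter.mp ha0).2
      refine ⟨a0, Equiv.Perm.mem_support.mp ha0', ?_⟩
      intro b hb
      have hbsupp : b ∈ τ.support := Equiv.Perm.mem_support.mpr hb
      have hpb : p b := by
        rw [hsuppτ, hF] at hbsupp
        exact (Finset.mem_filter.mp hbsupp).2
      obtain ⟨e, he⟩ := hcompat a0 b hpa0 hpb
      exact ⟨(e : ℤ), by rw [zpow_natCast]; exact he⟩
    have hsignτ : Equiv.Perm.sign τ = -(-1 : ℤˣ) ^ F.card := by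
      rw [hcycτ.sign, hsuppτ]
    have hmul : Equiv.Perm.sign τ = Equiv.Perm.sign ωc * Equiv.Perm.sign ωr := by
      rw [show τ = ωc * ωr from rfl, map_mul]
    rw [hsignτ, hsignr, hsignc, ← pow_add] at hmul
    have hone : (-1 : ℤˣ) ^ (F.card + n + (F.card + m) + (F.card + 1)) = 1 := by
      rw [pow_add, ← hmul, pow_succ, mul_neg_one, neg_mul_neg, ← pow_add]
      exact Even.neg_one_pow ⟨F.card, rfl⟩
    have hEv : Even (F.card + n + (F.card + m) + (F.card + 1)) :=
      (neg_one_pow_eq_one_iff_even (by decide : (-1 : ℤˣ) ≠ 1)).mp hone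
    exact parity_key hNr hNc hEv
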